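/- Let X₁, ..., X_d be independent random variables, F square-integrable, and f_S the fANOVA components. Then the variance decomposes: Var[F(X)] = Σ_{S ⊆ D, S ≠ ∅} Var[f_S(X)]. -/

import Mathlib

open Finset MeasureTheory ProbabilityTheory

section Combinatorics

variable {α : Type*} [DecidableEq α]

lemma fanova_neg_one_sq (v : ℕ) : ((-1:ℝ)) ^ v * (-1) ^ v = 1 := by
  rw [← pow_add, ← two_mul, pow_mul]; norm_num

lemma fanova_neg_one_pow_sub {v b : ℕ} (h : v ≤ b) :
    ((-1:ℝ)) ^ (b - v) = (-1) ^ b * (-1) ^ v := by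
  calc ((-1:ℝ)) ^ (b - v) = (-1:ℝ) ^ (b - v) * ((-1) ^ v * (-1) ^ v) := by
        rw [fanova_neg_one_sq, mul_one]
    _ = ((-1:ℝ) ^ (b - v) * (-1) ^ v) * (-1) ^ v := by ring
    _ = (-1:ℝ) ^ (b - v + v) * (-1) ^ v := by rw [pow_add]
    _ = _ := by rw [Nat.sub_add_cancel h]

lemma fanova_sum_powerset_sign (B : Finset α) :
    ∑ V ∈ B.powerset, ((-1:ℝ)) ^ V.card = if B = ∅ then 1 else 0 := by
  have h := Finset.sum_powerset_neg_one_pow_card (x := B)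
  have h2 : ((∑ m ∈ B.powerset, (-1:ℤ) ^ m.card : ℤ) : ℝ)
      = ∑ V ∈ B.powerset, ((-1:ℝ)) ^ V.card := by push_cast; rfl
  rw [← h2, h]; split <;> norm_num

lemma fanova_sum_sign_sdiff (B : Finset α) :
    ∑ V ∈ B.powerset, ((-1:ℝ)) ^ (B.card - V.card) = if B = ∅ then 1 else 0 := by
  calc ∑ V ∈ B.powerset, ((-1:ℝ)) ^ (B.card - V.card)
      = ∑ V ∈ B.powerset, (-1:ℝ) ^ B.card * (-1) ^ V.card :=
        Finset.sum_congr rfl fun V hV =>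
          fanova_neg_one_pow_sub (card_le_card (mem_powerset.mp hV))
    _ = (-1:ℝ) ^ B.card * ∑ V ∈ B.powerset, (-1:ℝ) ^ V.card := by rw [Finset.mul_sum]
    _ = _ := by rw [fanova_sum_powerset_sign]; split_ifs with h <;> simp [h]

lemma fanova_keyL (A W : Finset α) :
    ∑ U ∈ A.powerset.filter (fun U => W ⊆ U), ((-1:ℝ)) ^ (A.card - U.card)
      = if W = A then 1 else 0 := by
  by_cases hWA : W ⊆ A
  · have h1 : ∑ U ∈ A.powerset.filter (fun U => W ⊆ U), ((-1:ℝ)) ^ (A.card - U.card)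
        = ∑ V ∈ (A \ W).powerset, ((-1:ℝ)) ^ ((A \ W).card - V.card) := by
      refine Finset.sum_nbij' (fun U => U \ W) (fun V => V ∪ W) ?_ ?_ ?_ ?_ ?_
      · intro U hU
        simp only [mem_filter, mem_powerset] at hU
        exact mem_powerset.mpr (sdiff_subset_sdiff hU.1 Subset.rfl)
      · intro V hV
        simp only [mem_powerset] at hV
        refine mem_filter.mpr ⟨mem_powerset.mpr (union_subset (hV.trans sdiff_subset) hWA),
          subset_union_right⟩
      · intro U hU
        simp only [mem_filter, mem_powerset] at hU
        exact sdiff_union_of_subset hU.2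
      · intro V hV
        simp only [mem_powerset] at hV
        have hd : Disjoint V W := disjoint_of_subset_left hV sdiff_disjoint
        show (V ∪ W) \ W = V
        rw [union_sdiff_right, sdiff_eq_self_of_disjoint hd]
      · intro U hU
        simp only [mem_filter, mem_powerset] at hU
        have h1 : U ⊆ A := hU.1
        have h2 : W ⊆ U := hU.2
        have hc1 : U.card ≤ A.card := card_le_card h1
        have hc2 : W.card ≤ U.card := card_le_card h2
        have e1 : (A \ W).card = A.card - W.card := card_sdiff_of_subset hWA
        have e2 : (U \ W).card = U.card - W.card := card_sdiff_of_subset h2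
        show ((-1:ℝ)) ^ (A.card - U.card) = ((-1:ℝ)) ^ ((A \ W).card - (U \ W).card)
        rw [e1, e2]
        congr 1
        omega
    rw [h1, fanova_sum_sign_sdiff]
    have : A \ W = ∅ ↔ W = A := by
      rw [Finset.sdiff_eq_empty_iff_subset]
      constructor
      · intro h; exact (Finset.Subset.antisymm hWA h).symm ▸ rfl
      · intro h; rw [h]
    by_cases h : W = A
    · simp [this.mpr h, h]
    · rw [if_neg (fun hh => h (this.mp hh)), if_neg h]
  · have hfe : A.powerset.filter (fun U => W ⊆ U) = ∅ := by
      refine Finset.filter_eq_empty_iff.mpr ?_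
      intro U hU hWU
      exact hWA (hWU.trans (mem_powerset.mp hU))
    have hne : W ≠ A := fun h => hWA (h ▸ Subset.rfl)
    rw [hfe, Finset.sum_empty, if_neg hne]

lemma fanova_keyL' (A W : Finset α) (hWA : W ⊆ A) :
    ∑ S ∈ A.powerset.filter (fun S => W ⊆ S), ((-1:ℝ)) ^ (S.card - W.card)
      = if W = A then 1 else 0 := by
  have h1 : ∑ S ∈ A.powerset.filter (fun S => W ⊆ S), ((-1:ℝ)) ^ (S.card - W.card)
      = (-1:ℝ) ^ (A.card - W.card) *
        ∑ S ∈ A.powerset.filter (fun S => W ⊆ S), ((-1:ℝ)) ^ (A.card - S.card) := by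
    rw [Finset.mul_sum]
    refine Finset.sum_congr rfl fun S hS => ?_
    simp only [mem_filter, mem_powerset] at hS
    have hc1 : S.card ≤ A.card := card_le_card hS.1
    have hc2 : W.card ≤ S.card := card_le_card hS.2
    have hadd : A.card - S.card + (S.card - W.card) = A.card - W.card := by omega
    calc ((-1:ℝ)) ^ (S.card - W.card)
        = ((-1:ℝ) ^ (A.card - S.card) * (-1) ^ (A.card - S.card)) * (-1) ^ (S.card - W.card) := by
          rw [fanova_neg_one_sq, one_mul]
      _ = ((-1:ℝ)) ^ (A.card - S.card + (S.card - W.card)) * (-1) ^ (A.card - S.card) := by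
          rw [pow_add]; ring
      _ = _ := by rw [hadd]
  rw [h1, fanova_keyL]
  by_cases h : W = A <;> simp [h]

lemma fanova_inversion (A : Finset α) (b : Finset α → ℝ) :
    ∑ S ∈ A.powerset, ∑ W ∈ S.powerset, ((-1:ℝ)) ^ (S.card - W.card) * b W = b A := by
  have hswap : ∑ S ∈ A.powerset, ∑ W ∈ S.powerset, ((-1:ℝ)) ^ (S.card - W.card) * b W
      = ∑ W ∈ A.powerset, ∑ S ∈ A.powerset.filter (fun S => W ⊆ S),
          ((-1:ℝ)) ^ (S.card - W.card) * b W := by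
    refine Finset.sum_comm' ?_
    intro S W
    simp only [mem_powerset, mem_filter]
    constructor
    · rintro ⟨h1, h2⟩; exact ⟨⟨h1, h2⟩, h2.trans h1⟩
    · rintro ⟨⟨h1, h2⟩, _⟩; exact ⟨h1, h2⟩
  rw [hswap]
  have h2 : ∀ W ∈ A.powerset, ∑ S ∈ A.powerset.filter (fun S => W ⊆ S),
      ((-1:ℝ)) ^ (S.card - W.card) * b W = (if W = A then 1 else 0) * b W := by
    intro W hW
    rw [← Finset.sum_mul, fanova_keyL' A W (mem_powerset.mp hW)]
  rw [Finset.sum_congr rfl h2]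
  have : ∀ W ∈ A.powerset, (if W = A then 1 else 0) * b W = if W = A then b W else 0 := by
    intro W _; split <;> simp
  rw [Finset.sum_congr rfl this, Finset.sum_ite_eq' A.powerset A b,
    if_pos (mem_powerset.mpr Subset.rfl)]

lemma fanova_indsum (S W : Finset α) :
    ∑ U ∈ S.powerset, (if W ⊆ U then ((-1:ℝ)) ^ (S.card - U.card) else 0)
      = if W = S then 1 else 0 := by
  rw [← Finset.sum_filter]
  exact fanova_keyL S W

lemma fanova_diag (S : Finset α) (b : Finset α → ℝ) :
    ∑ U ∈ S.powerset, ∑ V ∈ S.powerset,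
        (((-1:ℝ)) ^ (S.card - U.card) * ((-1:ℝ)) ^ (S.card - V.card)) * b (U ∩ V)
      = ∑ W ∈ S.powerset, ((-1:ℝ)) ^ (S.card - W.card) * b W := by
  set c : Finset α → ℝ := fun W => ∑ R ∈ W.powerset, ((-1:ℝ)) ^ (W.card - R.card) * b R with hc
  have hbc : ∀ A : Finset α, b A = ∑ W ∈ A.powerset, c W := fun A =>
    (fanova_inversion A b).symm
  have hps : ∀ U V : Finset α, U ⊆ S → V ⊆ S →
      (U ∩ V).powerset = S.powerset.filter (fun W => W ⊆ U ∧ W ⊆ V) := by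
    intro U V hU hV
    ext W
    simp only [mem_powerset, mem_filter, subset_inter_iff]
    constructor
    · rintro ⟨h1, h2⟩; exact ⟨h1.trans hU, h1, h2⟩
    · rintro ⟨_, h2, h3⟩; exact ⟨h2, h3⟩
  have step1 : ∑ U ∈ S.powerset, ∑ V ∈ S.powerset,
        (((-1:ℝ)) ^ (S.card - U.card) * ((-1:ℝ)) ^ (S.card - V.card)) * b (U ∩ V)
      = ∑ U ∈ S.powerset, ∑ V ∈ S.powerset, ∑ W ∈ S.powerset,
          (if W ⊆ U then ((-1:ℝ)) ^ (S.card - U.card) else 0) *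
          ((if W ⊆ V then ((-1:ℝ)) ^ (S.card - V.card) else 0) * c W) := by
    refine Finset.sum_congr rfl fun U hU => Finset.sum_congr rfl fun V hV => ?_
    rw [hbc (U ∩ V), hps U V (mem_powerset.mp hU) (mem_powerset.mp hV), Finset.sum_filter,
      Finset.mul_sum]
    refine Finset.sum_congr rfl fun W hW => ?_
    by_cases h1 : W ⊆ U <;> by_cases h2 : W ⊆ V <;> simp [h1, h2] <;> ring
  rw [step1]
  have step2 : ∑ U ∈ S.powerset, ∑ V ∈ S.powerset, ∑ W ∈ S.powerset,
          (if W ⊆ U then ((-1:ℝ)) ^ (S.card - U.card) else 0) *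
          ((if W ⊆ V then ((-1:ℝ)) ^ (S.card - V.card) else 0) * c W)
      = ∑ W ∈ S.powerset,
          (∑ U ∈ S.powerset, if W ⊆ U then ((-1:ℝ)) ^ (S.card - U.card) else 0) *
          ((∑ V ∈ S.powerset, if W ⊆ V then ((-1:ℝ)) ^ (S.card - V.card) else 0) * c W) := by
    calc ∑ U ∈ S.powerset, ∑ V ∈ S.powerset, ∑ W ∈ S.powerset,
          (if W ⊆ U then ((-1:ℝ)) ^ (S.card - U.card) else 0) *
          ((if W ⊆ V then ((-1:ℝ)) ^ (S.card - V.card) else 0) * c W)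
        = ∑ U ∈ S.powerset, ∑ W ∈ S.powerset, ∑ V ∈ S.powerset,
          (if W ⊆ U then ((-1:ℝ)) ^ (S.card - U.card) else 0) *
          ((if W ⊆ V then ((-1:ℝ)) ^ (S.card - V.card) else 0) * c W) :=
          Finset.sum_congr rfl fun U _ => Finset.sum_comm
      _ = ∑ W ∈ S.powerset, ∑ U ∈ S.powerset, ∑ V ∈ S.powerset,
          (if W ⊆ U then ((-1:ℝ)) ^ (S.card - U.card) else 0) *
          ((if W ⊆ V then ((-1:ℝ)) ^ (S.card - V.card) else 0) * c W) := Finset.sum_comm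
      _ = ∑ W ∈ S.powerset,
          (∑ U ∈ S.powerset, if W ⊆ U then ((-1:ℝ)) ^ (S.card - U.card) else 0) *
          ((∑ V ∈ S.powerset, if W ⊆ V then ((-1:ℝ)) ^ (S.card - V.card) else 0) * c W) := by
          refine Finset.sum_congr rfl fun W _ => ?_
          rw [Finset.sum_mul]
          refine Finset.sum_congr rfl fun U _ => ?_
          rw [Finset.sum_mul, Finset.mul_sum]
  rw [step2]
  have step3 : ∑ W ∈ S.powerset,
          (∑ U ∈ S.powerset, if W ⊆ U then ((-1:ℝ)) ^ (S.card - U.card) else 0) *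
          ((∑ V ∈ S.powerset, if W ⊆ V then ((-1:ℝ)) ^ (S.card - V.card) else 0) * c W)
      = ∑ W ∈ S.powerset, if W = S then c W else 0 := by
    refine Finset.sum_congr rfl fun W _ => ?_
    rw [fanova_indsum]
    by_cases h : W = S <;> simp [h]
  rw [step3, Finset.sum_ite_eq' S.powerset S c, if_pos (mem_powerset.mpr Subset.rfl)]

end Combinatorics

section MeasurePart

variable {d : ℕ}

/-- Combine two vectors: coordinates in `S` from the first, the rest from the second. -/
noncomputable def fanovaComb (S : Finset (Fin d)) (p : (Fin d → ℝ) × (Fin d → ℝ)) : Fin d → ℝ :=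
  fun i => if i ∈ S then p.1 i else p.2 i

lemma fanovaComb_measurable (S : Finset (Fin d)) : Measurable (fanovaComb S) := by
  apply measurable_pi_lambda
  intro i
  by_cases h : i ∈ S
  · simpa [fanovaComb, h, Function.comp_def] using (measurable_pi_apply i).comp (measurable_fst)
  · simpa [fanovaComb, h, Function.comp_def] using (measurable_pi_apply i).comp (measurable_snd)

noncomputable def fanovaPhi (U V : Finset (Fin d))
    (p : (Fin d → ℝ) × ((Fin d → ℝ) × (Fin d → ℝ))) : (Fin d → ℝ) × (Fin d → ℝ) :=
  (fanovaComb U (p.1, p.2.1), fanovaComb V (p.1, p.2.2))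

lemma fanovaPhi_measurable (U V : Finset (Fin d)) : Measurable (fanovaPhi U V) :=
  (((fanovaComb_measurable U).comp
      (measurable_fst.prodMk (measurable_fst.comp measurable_snd)))).prodMk
    (((fanovaComb_measurable V).comp
      (measurable_fst.prodMk (measurable_snd.comp measurable_snd))))

variable (μi : Fin d → Measure ℝ) [∀ i, IsProbabilityMeasure (μi i)]

lemma fanova_map_comb (S : Finset (Fin d)) :
    Measure.map (fanovaComb S) ((Measure.pi μi).prod (Measure.pi μi)) = Measure.pi μi := by
  refine (Measure.pi_eq fun s hs => ?_).symm
  rw [Measure.map_apply (fanovaComb_measurable S) (MeasurableSet.univ_pi hs)]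
  have hpre : fanovaComb S ⁻¹' (Set.pi Set.univ s)
      = (Set.pi Set.univ fun i => if i ∈ S then s i else Set.univ) ×ˢ
        (Set.pi Set.univ fun i => if i ∈ S then Set.univ else s i) := by
    ext p
    simp only [Set.mem_preimage, Set.mem_pi, Set.mem_univ, forall_true_left, Set.mem_prod,
      fanovaComb]
    constructor
    · intro h
      constructor <;> intro i <;> have hi' := h i <;> by_cases hi : i ∈ S <;> simp_all
    · rintro ⟨h1, h2⟩ i
      have h1' := h1 i
      have h2' := h2 i
      by_cases hi : i ∈ S <;> simp_all
  rw [hpre, Measure.prod_prod, Measure.pi_pi, Measure.pi_pi, ← Finset.prod_mul_distrib]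
  refine Finset.prod_congr rfl fun i _ => ?_
  by_cases hi : i ∈ S <;> simp [hi]

lemma fanova_phi_box (U V : Finset (Fin d)) (s t : Fin d → Set ℝ)
    (hs : ∀ i, MeasurableSet (s i)) (ht : ∀ i, MeasurableSet (t i)) :
    Measure.map (fanovaPhi U V)
        ((Measure.pi μi).prod ((Measure.pi μi).prod (Measure.pi μi)))
        ((Set.pi Set.univ s) ×ˢ (Set.pi Set.univ t))
      = ∏ i, (if i ∈ U ∧ i ∈ V then μi i (s i ∩ t i) else μi i (s i) * μi i (t i)) := by
  rw [Measure.map_apply (fanovaPhi_measurable U V)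
    ((MeasurableSet.univ_pi hs).prod (MeasurableSet.univ_pi ht))]
  have hpre : fanovaPhi U V ⁻¹' ((Set.pi Set.univ s) ×ˢ (Set.pi Set.univ t))
      = (Set.pi Set.univ fun i =>
          (if i ∈ U then s i else Set.univ) ∩ (if i ∈ V then t i else Set.univ)) ×ˢ
        ((Set.pi Set.univ fun i => if i ∈ U then Set.univ else s i) ×ˢ
         (Set.pi Set.univ fun i => if i ∈ V then Set.univ else t i)) := by
    ext ⟨x, y, z⟩
    simp only [fanovaPhi, fanovaComb, Set.mem_preimage, Set.mem_prod, Set.mem_pi, Set.mem_univ,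
      forall_true_left, Set.mem_inter_iff]
    constructor
    · rintro ⟨h1, h2⟩
      refine ⟨fun i => ⟨?_, ?_⟩, fun i => ?_, fun i => ?_⟩
      · have := h1 i; by_cases hu : i ∈ U <;> simp_all
      · have := h2 i; by_cases hv : i ∈ V <;> simp_all
      · have := h1 i; by_cases hu : i ∈ U <;> simp_all
      · have := h2 i; by_cases hv : i ∈ V <;> simp_all
    · rintro ⟨h1, h2, h3⟩
      constructor <;> intro i
      · have ha := (h1 i).1; have hb := h2 i
        by_cases hu : i ∈ U <;> simp_all
      · have ha := (h1 i).2; have hb := h3 i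
        by_cases hv : i ∈ V <;> simp_all
  rw [hpre, Measure.prod_prod, Measure.prod_prod, Measure.pi_pi, Measure.pi_pi, Measure.pi_pi,
    ← Finset.prod_mul_distrib, ← Finset.prod_mul_distrib]
  refine Finset.prod_congr rfl fun i _ => ?_
  by_cases hu : i ∈ U <;> by_cases hv : i ∈ V <;>
    simp [hu, hv, Set.inter_univ, Set.univ_inter, mul_comm]

lemma fanova_map_phi (U V : Finset (Fin d)) :
    Measure.map (fanovaPhi U V)
        ((Measure.pi μi).prod ((Measure.pi μi).prod (Measure.pi μi)))
      = Measure.map (fanovaPhi (U ∩ V) (U ∩ V))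
        ((Measure.pi μi).prod ((Measure.pi μi).prod (Measure.pi μi))) := by
  have hspan : IsCountablySpanning
      (Set.pi Set.univ '' Set.pi Set.univ fun _ : Fin d => {s : Set ℝ | MeasurableSet s}) := by
    refine ⟨fun _ => Set.univ, fun _ => ⟨fun _ => Set.univ, ?_, by simp⟩,
      Set.iUnion_const _⟩
    intro i _
    simp only [Set.mem_setOf_eq]
    exact MeasurableSet.univ
  haveI h1 : IsProbabilityMeasure (Measure.map (fanovaPhi U V)
      ((Measure.pi μi).prod ((Measure.pi μi).prod (Measure.pi μi)))) :=
    Measure.isProbabilityMeasure_map (fanovaPhi_measurable U V).aemeasurable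
  haveI h2 : IsProbabilityMeasure (Measure.map (fanovaPhi (U ∩ V) (U ∩ V))
      ((Measure.pi μi).prod ((Measure.pi μi).prod (Measure.pi μi)))) :=
    Measure.isProbabilityMeasure_map (fanovaPhi_measurable (U ∩ V) (U ∩ V)).aemeasurable
  refine MeasureTheory.ext_of_generate_finite _
    (generateFrom_eq_prod generateFrom_pi generateFrom_pi hspan hspan).symm
    (isPiSystem_pi.prod isPiSystem_pi) ?_ ?_
  · rintro _ ⟨_, ⟨s, hs, rfl⟩, _, ⟨t, ht, rfl⟩, rfl⟩
    have hs' : ∀ i, MeasurableSet (s i) := fun i => hs i (Set.mem_univ i)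
    have ht' : ∀ i, MeasurableSet (t i) := fun i => ht i (Set.mem_univ i)
    rw [fanova_phi_box μi U V s t hs' ht', fanova_phi_box μi (U ∩ V) (U ∩ V) s t hs' ht']
    refine Finset.prod_congr rfl fun i _ => ?_
    simp [Finset.mem_inter, and_self]
  · simp [measure_univ]

end MeasurePart

section Helpers

lemma fanova_mul_L2_integrable {β : Type*} [MeasurableSpace β] {ν : Measure β} {u v : β → ℝ}
    (hu : MemLp u 2 ν) (hv : MemLp v 2 ν) : Integrable (fun x => u x * v x) ν := by
  refine Integrable.mono' ((hu.integrable_sq.add hv.integrable_sq).div_const 2)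
    (hu.aestronglyMeasurable.mul hv.aestronglyMeasurable) (Filter.Eventually.of_forall fun x => ?_)
  simp only [Pi.add_apply, Pi.div_apply]
  rw [Real.norm_eq_abs, abs_mul]
  nlinarith [two_mul_le_add_sq (|u x|) (|v x|), sq_abs (u x), sq_abs (v x),
    abs_nonneg (u x), abs_nonneg (v x)]

lemma fanova_sq_integral_le {β : Type*} [MeasurableSpace β] {ν : Measure β}
    [IsProbabilityMeasure ν] {g : β → ℝ} (hg : MemLp g 2 ν) :
    (∫ x, g x ∂ν) ^ 2 ≤ ∫ x, (g x) ^ 2 ∂ν := by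
  have h := variance_nonneg g ν
  rw [variance_eq_sub hg] at h
  simp only [Pi.pow_apply] at h
  linarith

end Helpers

section Mask

variable {d : ℕ} (μi : Fin d → Measure ℝ) [∀ i, IsProbabilityMeasure (μi i)]
  (F : (Fin d → ℝ) → ℝ)

/-- The masked function: coordinates in `W` frozen at `x`, the rest integrated out. -/
noncomputable def fanovaMask (W : Finset (Fin d)) (x : Fin d → ℝ) : ℝ :=
  ∫ y, F (fanovaComb W (x, y)) ∂(Measure.pi μi)

variable {F}
variable (hFmeas : Measurable F) (hFμ : MemLp F 2 (Measure.pi μi))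

include hFmeas in
lemma fanovaMask_sm (W : Finset (Fin d)) : StronglyMeasurable (fanovaMask μi F W) :=
  (hFmeas.comp (fanovaComb_measurable W)).stronglyMeasurable.integral_prod_right'

include hFmeas hFμ in
lemma fanova_comb_integrable (W : Finset (Fin d)) :
    Integrable (fun p => F (fanovaComb W p)) ((Measure.pi μi).prod (Measure.pi μi)) := by
  have h : Integrable F (Measure.map (fanovaComb W) ((Measure.pi μi).prod (Measure.pi μi))) := by
    rw [fanova_map_comb]; exact hFμ.integrable one_le_two
  exact (integrable_map_measure hFmeas.aestronglyMeasurable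
    (fanovaComb_measurable W).aemeasurable).mp h

include hFmeas hFμ in
lemma fanova_comb_sq_integrable (W : Finset (Fin d)) :
    Integrable (fun p => (F (fanovaComb W p)) ^ 2) ((Measure.pi μi).prod (Measure.pi μi)) := by
  have h : Integrable (fun x => F x ^ 2)
      (Measure.map (fanovaComb W) ((Measure.pi μi).prod (Measure.pi μi))) := by
    rw [fanova_map_comb]; exact hFμ.integrable_sq
  exact (integrable_map_measure (hFmeas.pow_const 2).aestronglyMeasurable
    (fanovaComb_measurable W).aemeasurable).mp h

include hFmeas hFμ in
lemma fanovaMask_integral (W : Finset (Fin d)) :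
    ∫ x, fanovaMask μi F W x ∂(Measure.pi μi) = ∫ x, F x ∂(Measure.pi μi) := by
  have h1 : ∫ x, fanovaMask μi F W x ∂(Measure.pi μi)
      = ∫ p, F (fanovaComb W p) ∂((Measure.pi μi).prod (Measure.pi μi)) :=
    (integral_prod _ (fanova_comb_integrable μi hFmeas hFμ W)).symm
  rw [h1]
  calc ∫ p, F (fanovaComb W p) ∂((Measure.pi μi).prod (Measure.pi μi))
      = ∫ y, F y ∂(Measure.map (fanovaComb W) ((Measure.pi μi).prod (Measure.pi μi))) :=
        (integral_map (fanovaComb_measurable W).aemeasurable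
          hFmeas.aestronglyMeasurable).symm
    _ = ∫ x, F x ∂(Measure.pi μi) := by rw [fanova_map_comb]

include hFmeas hFμ in
lemma fanovaMask_memℒp (W : Finset (Fin d)) : MemLp (fanovaMask μi F W) 2 (Measure.pi μi) := by
  refine (memLp_two_iff_integrable_sq
    (fanovaMask_sm μi hFmeas W).aestronglyMeasurable).mpr ?_
  have hsq : (fun x => fanovaMask μi F W x ^ 2)
      = fun x => fanovaMask μi F W x * fanovaMask μi F W x := by
    funext x; ring
  rw [hsq]
  have hKint : Integrable (fun x => ∫ y, (F (fanovaComb W (x, y))) ^ 2 ∂(Measure.pi μi))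
      (Measure.pi μi) := (fanova_comb_sq_integrable μi hFmeas hFμ W).integral_prod_left
  refine Integrable.mono' hKint
    (((fanovaMask_sm μi hFmeas W).mul (fanovaMask_sm μi hFmeas W)).aestronglyMeasurable) ?_
  filter_upwards [(fanova_comb_integrable μi hFmeas hFμ W).prod_right_ae,
    (fanova_comb_sq_integrable μi hFmeas hFμ W).prod_right_ae] with x h1 h2
  have hmem : MemLp (fun y => F (fanovaComb W (x, y))) 2 (Measure.pi μi) := by
    refine (memLp_two_iff_integrable_sq ?_).mpr h2
    exact (hFmeas.comp ((fanovaComb_measurable W).comp measurable_prodMk_left)).aestronglyMeasurable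
  have hj := fanova_sq_integral_le hmem
  calc ‖fanovaMask μi F W x * fanovaMask μi F W x‖
      = fanovaMask μi F W x ^ 2 := by
        rw [Real.norm_eq_abs, abs_of_nonneg (mul_self_nonneg _), ← sq]
    _ ≤ ∫ y, (F (fanovaComb W (x, y))) ^ 2 ∂(Measure.pi μi) := hj

include hFmeas hFμ in
lemma fanovaMask_mul (U V : Finset (Fin d)) :
    ∫ x, fanovaMask μi F U x * fanovaMask μi F V x ∂(Measure.pi μi)
      = ∫ x, fanovaMask μi F (U ∩ V) x * fanovaMask μi F (U ∩ V) x ∂(Measure.pi μi) := by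
  set μ := Measure.pi μi with hμdef
  set μ3 := μ.prod (μ.prod μ) with hμ3
  have hproj : ∀ W : Finset (Fin d),
      Measure.map (fun p : (Fin d → ℝ) × ((Fin d → ℝ) × (Fin d → ℝ)) =>
        fanovaComb W (p.1, p.2.1)) μ3 = μ := by
    intro W
    have hc : (fun p : (Fin d → ℝ) × ((Fin d → ℝ) × (Fin d → ℝ)) =>
        fanovaComb W (p.1, p.2.1)) = (fanovaComb W) ∘ (Prod.map id Prod.fst) := rfl
    rw [hc, ← Measure.map_map (fanovaComb_measurable W) (measurable_id.prodMap measurable_fst)]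
    have hm : Measure.map (Prod.map id Prod.fst) μ3 = μ.prod μ := by
      rw [← Measure.map_prod_map _ _ measurable_id measurable_fst, Measure.map_id,
        Measure.map_fst_prod, measure_univ, one_smul]
    rw [hm, fanova_map_comb]
  have hproj2 : ∀ W : Finset (Fin d),
      Measure.map (fun p : (Fin d → ℝ) × ((Fin d → ℝ) × (Fin d → ℝ)) =>
        fanovaComb W (p.1, p.2.2)) μ3 = μ := by
    intro W
    have hc : (fun p : (Fin d → ℝ) × ((Fin d → ℝ) × (Fin d → ℝ)) =>
        fanovaComb W (p.1, p.2.2)) = (fanovaComb W) ∘ (Prod.map id Prod.snd) := rfl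
    rw [hc, ← Measure.map_map (fanovaComb_measurable W) (measurable_id.prodMap measurable_snd)]
    have hm : Measure.map (Prod.map id Prod.snd) μ3 = μ.prod μ := by
      rw [← Measure.map_prod_map _ _ measurable_id measurable_snd, Measure.map_id,
        Measure.map_snd_prod, measure_univ, one_smul]
    rw [hm, fanova_map_comb]
  have hmeas1 : ∀ W : Finset (Fin d), Measurable
      (fun p : (Fin d → ℝ) × ((Fin d → ℝ) × (Fin d → ℝ)) => fanovaComb W (p.1, p.2.1)) :=
    fun W => (fanovaComb_measurable W).comp
      (measurable_fst.prodMk (measurable_fst.comp measurable_snd))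
  have hmeas2 : ∀ W : Finset (Fin d), Measurable
      (fun p : (Fin d → ℝ) × ((Fin d → ℝ) × (Fin d → ℝ)) => fanovaComb W (p.1, p.2.2)) :=
    fun W => (fanovaComb_measurable W).comp
      (measurable_fst.prodMk (measurable_snd.comp measurable_snd))
  have hmem1 : ∀ W : Finset (Fin d),
      MemLp (fun p : (Fin d → ℝ) × ((Fin d → ℝ) × (Fin d → ℝ)) =>
        F (fanovaComb W (p.1, p.2.1))) 2 μ3 := by
    intro W
    have h : MemLp F 2 (Measure.map (fun p : (Fin d → ℝ) × ((Fin d → ℝ) × (Fin d → ℝ)) =>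
        fanovaComb W (p.1, p.2.1)) μ3) := by rw [hproj W]; exact hFμ
    exact (memLp_map_measure_iff hFmeas.aestronglyMeasurable (hmeas1 W).aemeasurable).mp h
  have hmem2 : ∀ W : Finset (Fin d),
      MemLp (fun p : (Fin d → ℝ) × ((Fin d → ℝ) × (Fin d → ℝ)) =>
        F (fanovaComb W (p.1, p.2.2))) 2 μ3 := by
    intro W
    have h : MemLp F 2 (Measure.map (fun p : (Fin d → ℝ) × ((Fin d → ℝ) × (Fin d → ℝ)) =>
        fanovaComb W (p.1, p.2.2)) μ3) := by rw [hproj2 W]; exact hFμ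
    exact (memLp_map_measure_iff hFmeas.aestronglyMeasurable (hmeas2 W).aemeasurable).mp h
  have hstep : ∀ A B : Finset (Fin d),
      ∫ x, fanovaMask μi F A x * fanovaMask μi F B x ∂μ
        = ∫ q, F q.1 * F q.2 ∂(Measure.map (fanovaPhi A B) μ3) := by
    intro A B
    have hGint : Integrable (fun p : (Fin d → ℝ) × ((Fin d → ℝ) × (Fin d → ℝ)) =>
        F (fanovaComb A (p.1, p.2.1)) * F (fanovaComb B (p.1, p.2.2))) μ3 :=
      fanova_mul_L2_integrable (hmem1 A) (hmem2 B)
    have h1 : ∫ p, F (fanovaComb A (p.1, p.2.1)) * F (fanovaComb B (p.1, p.2.2)) ∂μ3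
        = ∫ x, fanovaMask μi F A x * fanovaMask μi F B x ∂μ := by
      rw [integral_prod _ hGint]
      refine integral_congr_ae (Filter.Eventually.of_forall fun x => ?_)
      exact integral_prod_mul (f := fun y => F (fanovaComb A (x, y)))
        (g := fun z => F (fanovaComb B (x, z)))
    have h2 : ∫ q, F q.1 * F q.2 ∂(Measure.map (fanovaPhi A B) μ3)
        = ∫ p, F (fanovaComb A (p.1, p.2.1)) * F (fanovaComb B (p.1, p.2.2)) ∂μ3 :=
      integral_map (fanovaPhi_measurable A B).aemeasurable
        (((hFmeas.comp measurable_fst).mul (hFmeas.comp measurable_snd)).aestronglyMeasurable)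
    rw [h2, h1]
  rw [hstep U V, hstep (U ∩ V) (U ∩ V), fanova_map_phi]

lemma fanovaMask_univ (x : Fin d → ℝ) : fanovaMask μi F Finset.univ x = F x := by
  have h : ∀ y : Fin d → ℝ, F (fanovaComb Finset.univ (x, y)) = F x := by
    intro y
    have hc : fanovaComb Finset.univ (x, y) = x := funext fun i => by simp [fanovaComb]
    rw [hc]
  simp only [fanovaMask, h, integral_const, measure_univ, probReal_univ, one_smul]

lemma fanovaMask_empty (x : Fin d → ℝ) :
    fanovaMask μi F ∅ x = ∫ y, F y ∂(Measure.pi μi) := by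
  have h : ∀ y : Fin d → ℝ, F (fanovaComb ∅ (x, y)) = F y := by
    intro y
    have hc : fanovaComb ∅ (x, y) = y := funext fun i => by simp [fanovaComb]
    rw [hc]
  simp only [fanovaMask, h]

end Mask

/-- Sobol-Hoeffding variance decomposition of `F(X)` under feature independence. -/
theorem fanova_variance_decomposition
    {Ω : Type*} [MeasureSpace Ω] [IsProbabilityMeasure (ℙ : Measure Ω)]
    (d : ℕ) (X : Ω → (Fin d → ℝ))
    (hX : ∀ i, Measurable fun ω => X ω i)
    (hindep : iIndepFun (fun i ω => X ω i) ℙ)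
    (F : (Fin d → ℝ) → ℝ) (hFmeas : Measurable F)
    (hF : MemLp (fun ω => F (X ω)) 2 ℙ)
    (Fmask : Finset (Fin d) → (Fin d → ℝ) → ℝ)
    (hmask : ∀ S x, Fmask S x = ∫ ω, F (fun i => if i ∈ S then x i else X ω i) ∂ℙ)
    (f : Finset (Fin d) → (Fin d → ℝ) → ℝ)
    (hf : ∀ S x, f S x = ∑ T ∈ S.powerset, (-1 : ℝ) ^ (S.card - T.card) * Fmask T x) :
    variance (fun ω => F (X ω)) ℙ
      = ∑ S ∈ (Finset.univ : Finset (Fin d)).powerset.filter (fun S => S.Nonempty),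
          variance (fun ω => f S (X ω)) ℙ := by
  classical
  set μi : Fin d → Measure ℝ := fun i => Measure.map (fun ω => X ω i) ℙ with hμi
  haveI hPμi : ∀ i, IsProbabilityMeasure (μi i) :=
    fun i => Measure.isProbabilityMeasure_map (hX i).aemeasurable
  have hXmeas : Measurable X := measurable_pi_iff.mpr hX
  have hmapX : Measure.pi μi = Measure.map X ℙ := by
    refine Measure.pi_eq fun s hs => ?_
    rw [Measure.map_apply hXmeas (MeasurableSet.univ_pi hs)]
    have hpre : X ⁻¹' (Set.pi Set.univ s)
        = ⋂ i ∈ (Finset.univ : Finset (Fin d)), (fun ω => X ω i) ⁻¹' (s i) := by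
      ext ω; simp [Set.mem_pi]
    rw [hpre, hindep.measure_inter_preimage_eq_mul Finset.univ (fun i _ => hs i)]
    refine Finset.prod_congr rfl fun i _ => ?_
    simp only [hμi]
    rw [Measure.map_apply (hX i) (hs i)]
  have htrans : ∀ g : (Fin d → ℝ) → ℝ, AEStronglyMeasurable g (Measure.pi μi) →
      ∫ ω, g (X ω) ∂ℙ = ∫ x, g x ∂(Measure.pi μi) := by
    intro g hg
    rw [hmapX] at hg ⊢
    exact (integral_map hXmeas.aemeasurable hg).symm
  have hFμ : MemLp F 2 (Measure.pi μi) := by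
    rw [hmapX]
    exact (memLp_map_measure_iff hFmeas.aestronglyMeasurable hXmeas.aemeasurable).mpr hF
  have hmaskMask : ∀ (W : Finset (Fin d)) (x : Fin d → ℝ),
      Fmask W x = fanovaMask μi F W x := by
    intro W x
    rw [hmask]
    exact htrans (fun y => F (fanovaComb W (x, y)))
      ((hFmeas.comp ((fanovaComb_measurable W).comp measurable_prodMk_left)).aestronglyMeasurable)
  set b : Finset (Fin d) → ℝ :=
    fun W => ∫ x, fanovaMask μi F W x * fanovaMask μi F W x ∂(Measure.pi μi) with hb
  have hbUV : ∀ U V : Finset (Fin d),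
      ∫ x, fanovaMask μi F U x * fanovaMask μi F V x ∂(Measure.pi μi) = b (U ∩ V) := by
    intro U V
    simp only [hb]
    exact fanovaMask_mul μi hFmeas hFμ U V
  have hint : ∫ x, F x ∂(Measure.pi μi) = ∫ ω, F (X ω) ∂ℙ :=
    (htrans F hFmeas.aestronglyMeasurable).symm
  have hbuniv : b Finset.univ = ∫ ω, (F (X ω)) ^ 2 ∂ℙ := by
    simp only [hb]
    have h1 : ∀ x : Fin d → ℝ, fanovaMask μi F Finset.univ x * fanovaMask μi F Finset.univ x
        = F x ^ 2 := by
      intro x; rw [fanovaMask_univ]; ring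
    rw [integral_congr_ae (Filter.Eventually.of_forall h1)]
    exact (htrans (fun x => F x ^ 2) (hFmeas.pow_const 2).aestronglyMeasurable).symm
  have hbempty : b ∅ = (∫ ω, F (X ω) ∂ℙ) ^ 2 := by
    simp only [hb]
    have h1 : ∀ x : Fin d → ℝ, fanovaMask μi F ∅ x * fanovaMask μi F ∅ x
        = (∫ y, F y ∂(Measure.pi μi)) * (∫ y, F y ∂(Measure.pi μi)) := by
      intro x; rw [fanovaMask_empty]
    rw [integral_congr_ae (Filter.Eventually.of_forall h1), integral_const]
    simp only [measure_univ, probReal_univ, one_smul]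
    rw [hint]; ring
  have hvarF : variance (fun ω => F (X ω)) ℙ = b Finset.univ - b ∅ := by
    rw [variance_eq_sub hF]
    simp only [Pi.pow_apply]
    rw [hbuniv, hbempty]
  have hfS : ∀ S : Finset (Fin d), (fun ω => f S (X ω))
      = fun ω => ∑ T ∈ S.powerset, (-1:ℝ) ^ (S.card - T.card) * fanovaMask μi F T (X ω) := by
    intro S; funext ω; rw [hf]
    exact Finset.sum_congr rfl fun T _ => by rw [hmaskMask]
  have hMaskXmem : ∀ T : Finset (Fin d),
      MemLp (fun ω => fanovaMask μi F T (X ω)) 2 ℙ := by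
    intro T
    have h := fanovaMask_memℒp μi hFmeas hFμ T
    rw [hmapX] at h
    exact (memLp_map_measure_iff (fanovaMask_sm μi hFmeas T).aestronglyMeasurable
      hXmeas.aemeasurable).mp h
  have hfmem : ∀ S : Finset (Fin d), MemLp (fun ω => f S (X ω)) 2 ℙ := by
    intro S
    rw [hfS S]
    exact memLp_finsetSum _ fun T _ => ((hMaskXmem T).const_mul _)
  have hMaskXint : ∀ T : Finset (Fin d),
      ∫ ω, fanovaMask μi F T (X ω) ∂ℙ = ∫ ω, F (X ω) ∂ℙ := by
    intro T
    rw [htrans _ (fanovaMask_sm μi hFmeas T).aestronglyMeasurable,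
      fanovaMask_integral μi hFmeas hFμ T, hint]
  have hfmean : ∀ S : Finset (Fin d), S.Nonempty → ∫ ω, f S (X ω) ∂ℙ = 0 := by
    intro S hS
    have h0 : ∫ ω, f S (X ω) ∂ℙ = ∫ ω, ∑ T ∈ S.powerset,
        (-1:ℝ) ^ (S.card - T.card) * fanovaMask μi F T (X ω) ∂ℙ := by
      rw [← hfS S]
    rw [h0, integral_finset_sum _
      (fun T _ => (((hMaskXmem T).integrable one_le_two).const_mul _))]
    have h1 : ∀ T ∈ S.powerset, ∫ ω, (-1:ℝ) ^ (S.card - T.card) * fanovaMask μi F T (X ω) ∂ℙ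
        = (-1:ℝ) ^ (S.card - T.card) * ∫ ω, F (X ω) ∂ℙ := by
      intro T _
      rw [integral_const_mul, hMaskXint T]
    rw [Finset.sum_congr rfl h1, ← Finset.sum_mul, fanova_sum_sign_sdiff,
      if_neg (Finset.nonempty_iff_ne_empty.mp hS), zero_mul]
  have hMaskpairint : ∀ U V : Finset (Fin d),
      ∫ ω, fanovaMask μi F U (X ω) * fanovaMask μi F V (X ω) ∂ℙ = b (U ∩ V) := by
    intro U V
    rw [htrans (fun x => fanovaMask μi F U x * fanovaMask μi F V x)
      (((fanovaMask_sm μi hFmeas U).mul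
        (fanovaMask_sm μi hFmeas V)).aestronglyMeasurable), hbUV U V]
  have hfsq : ∀ S : Finset (Fin d), ∫ ω, (f S (X ω)) ^ 2 ∂ℙ
      = ∑ W ∈ S.powerset, (-1:ℝ) ^ (S.card - W.card) * b W := by
    intro S
    have hexp : ∀ ω, (f S (X ω)) ^ 2
        = ∑ U ∈ S.powerset, ∑ V ∈ S.powerset,
            ((-1:ℝ) ^ (S.card - U.card) * (-1:ℝ) ^ (S.card - V.card)) *
              (fanovaMask μi F U (X ω) * fanovaMask μi F V (X ω)) := by
      intro ω
      have h2 : f S (X ω) = ∑ T ∈ S.powerset,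
          (-1:ℝ) ^ (S.card - T.card) * fanovaMask μi F T (X ω) := by
        rw [hf]
        exact Finset.sum_congr rfl fun T _ => by rw [hmaskMask]
      rw [h2, sq, Finset.sum_mul_sum]
      exact Finset.sum_congr rfl fun U _ => Finset.sum_congr rfl fun V _ => by ring
    have hintUV : ∀ U V : Finset (Fin d), Integrable (fun ω =>
        ((-1:ℝ) ^ (S.card - U.card) * (-1:ℝ) ^ (S.card - V.card)) *
          (fanovaMask μi F U (X ω) * fanovaMask μi F V (X ω))) ℙ :=
      fun U V => (fanova_mul_L2_integrable (hMaskXmem U) (hMaskXmem V)).const_mul _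
    calc ∫ ω, (f S (X ω)) ^ 2 ∂ℙ
        = ∫ ω, ∑ U ∈ S.powerset, ∑ V ∈ S.powerset,
            ((-1:ℝ) ^ (S.card - U.card) * (-1:ℝ) ^ (S.card - V.card)) *
              (fanovaMask μi F U (X ω) * fanovaMask μi F V (X ω)) ∂ℙ :=
          integral_congr_ae (Filter.Eventually.of_forall hexp)
      _ = ∑ U ∈ S.powerset, ∑ V ∈ S.powerset,
            ((-1:ℝ) ^ (S.card - U.card) * (-1:ℝ) ^ (S.card - V.card)) *
              ∫ ω, fanovaMask μi F U (X ω) * fanovaMask μi F V (X ω) ∂ℙ := by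
          rw [integral_finset_sum _ (fun U _ => integrable_finset_sum _
            (fun V _ => hintUV U V))]
          refine Finset.sum_congr rfl fun U _ => ?_
          rw [integral_finset_sum _ (fun V _ => hintUV U V)]
          exact Finset.sum_congr rfl fun V _ => integral_const_mul _ _
      _ = ∑ U ∈ S.powerset, ∑ V ∈ S.powerset,
            ((-1:ℝ) ^ (S.card - U.card) * (-1:ℝ) ^ (S.card - V.card)) * b (U ∩ V) := by
          exact Finset.sum_congr rfl fun U _ => Finset.sum_congr rfl fun V _ => by
            rw [hMaskpairint U V]
      _ = ∑ W ∈ S.powerset, (-1:ℝ) ^ (S.card - W.card) * b W := fanova_diag S b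
  have hvarfS : ∀ S ∈ (Finset.univ : Finset (Fin d)).powerset.filter (fun S => S.Nonempty),
      variance (fun ω => f S (X ω)) ℙ
        = ∑ W ∈ S.powerset, (-1:ℝ) ^ (S.card - W.card) * b W := by
    intro S hSmem
    have hS : S.Nonempty := (Finset.mem_filter.mp hSmem).2
    rw [variance_eq_sub (hfmem S)]
    simp only [Pi.pow_apply]
    rw [hfsq S, hfmean S hS]
    norm_num
  have hsum := fanova_inversion (Finset.univ : Finset (Fin d)) b
  have hzero : ∑ W ∈ (∅ : Finset (Fin d)).powerset,
      (-1:ℝ) ^ ((∅ : Finset (Fin d)).card - W.card) * b W = b ∅ := by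
    simp
  have hsplit := Finset.sum_filter_add_sum_filter_not
    (Finset.univ : Finset (Fin d)).powerset (fun S => S.Nonempty)
    (fun S => ∑ W ∈ S.powerset, (-1:ℝ) ^ (S.card - W.card) * b W)
  have hnotfilter : (Finset.univ : Finset (Fin d)).powerset.filter (fun S => ¬ S.Nonempty)
      = {∅} := by
    ext T
    simp [Finset.not_nonempty_iff_eq_empty]
  rw [hnotfilter, Finset.sum_singleton, hzero, hsum] at hsplit
  have hRHS : ∑ S ∈ (Finset.univ : Finset (Fin d)).powerset.filter (fun S => S.Nonempty),
      variance (fun ω => f S (X ω)) ℙ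
      = ∑ S ∈ (Finset.univ : Finset (Fin d)).powerset.filter (fun S => S.Nonempty),
        ∑ W ∈ S.powerset, (-1:ℝ) ^ (S.card - W.card) * b W :=
    Finset.sum_congr rfl hvarfS
  rw [hRHS, hvarF]
  linarith
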